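/- Let (b_i, c_i)_{i=1}^D be a quadrature formula on [0,1] of order q ≥ 1 with nodes c_i ∈ [0,1]. Let I : ℝ^d → ℝ be (q+1)-times continuously differentiable with |∇I(z)| ≤ B for all z and all partial derivatives of I of order q+1 bounded by L. Let S, T_1, …, T_m : ℝ^d → ℝ^{d×d} take values in skew-symmetric matrices with operator norms ‖S(z)‖ ≤ c and ‖T_r(z)‖ ≤ c for all z. Then there exists a constant K, depending only on d, q, c, B, L and the quadrature data, such that whenever h, w_1, …, w_m ∈ ℝ and x, y ∈ ℝ^d satisfy y = x + (h S((x+y)/2) + Σ_{r=1}^m w_r T_r((x+y)/2)) · Σ_{i=1}^D b_i ∇I(x + c_i(y − x)), one has |I(y) − I(x)| ≤ K (|h| + Σ_{r=1}^m |w_r|) · |y − x|^q. -/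

import Mathlib

open Matrix

lemma euclid_decomp (d : ℕ) (u : EuclideanSpace ℝ (Fin d)) :
    u = ∑ k, u k • EuclideanSpace.single k (1:ℝ) := by
  have := (EuclideanSpace.basisFun (Fin d) ℝ).sum_repr u
  simpa [EuclideanSpace.basisFun_apply, EuclideanSpace.basisFun_repr] using this.symm

lemma euclid_abs_coord_le (d : ℕ) (u : EuclideanSpace ℝ (Fin d)) (i : Fin d) : |u i| ≤ ‖u‖ := by
  rw [EuclideanSpace.norm_eq, ← Real.sqrt_sq_eq_abs]
  apply Real.sqrt_le_sqrt
  calc (u i)^2 ≤ ∑ j, (u j)^2 :=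
        Finset.single_le_sum (fun j _ => sq_nonneg (u j)) (Finset.mem_univ i)
  _ = ∑ j, ‖u j‖^2 := by simp [Real.norm_eq_abs, sq_abs]

lemma multilinear_entry_bound {d n : ℕ} {L : ℝ}
    (F : ContinuousMultilinearMap ℝ (fun _ : Fin n => EuclideanSpace ℝ (Fin d)) ℝ)
    (hF : ∀ v : Fin n → Fin d, |F (fun j => EuclideanSpace.single (v j) (1:ℝ))| ≤ L)
    (hL : 0 ≤ L) (u : EuclideanSpace ℝ (Fin d)) :
    |F (fun _ => u)| ≤ L * (d * ‖u‖) ^ n := by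
  have hdec : (fun _ : Fin n => u) = fun _ : Fin n => ∑ k, u k • EuclideanSpace.single k (1:ℝ) :=
    funext fun _ => euclid_decomp d u
  rw [hdec]
  rw [show (F fun _ : Fin n => ∑ k, u k • EuclideanSpace.single k (1:ℝ))
      = ∑ v : Fin n → Fin d, F (fun j => u (v j) • EuclideanSpace.single (v j) (1:ℝ)) from
    F.toMultilinearMap.map_sum (fun _ k => u k • EuclideanSpace.single k (1:ℝ))]
  calc |∑ v : Fin n → Fin d, F (fun j => u (v j) • EuclideanSpace.single (v j) (1:ℝ))|
      ≤ ∑ v : Fin n → Fin d, |F (fun j => u (v j) • EuclideanSpace.single (v j) (1:ℝ))| :=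
        Finset.abs_sum_le_sum_abs _ _
    _ ≤ ∑ v : Fin n → Fin d, (∏ j, |u (v j)|) * L := by
        apply Finset.sum_le_sum
        intro v _
        have : F (fun j => u (v j) • EuclideanSpace.single (v j) (1:ℝ))
            = (∏ j, u (v j)) • F (fun j => EuclideanSpace.single (v j) (1:ℝ)) :=
          F.toMultilinearMap.map_smul_univ (fun j => u (v j)) _
        rw [this, smul_eq_mul, abs_mul, Finset.abs_prod]
        exact mul_le_mul_of_nonneg_left (hF v) (Finset.prod_nonneg fun j _ => abs_nonneg _)
    _ = (∑ k, |u k|) ^ n * L := by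
        rw [← Finset.sum_mul]
        congr 1
        rw [Fintype.sum_pow (fun k => |u k|) n]
    _ ≤ (d * ‖u‖) ^ n * L := by
        apply mul_le_mul_of_nonneg_right _ hL
        apply pow_le_pow_left₀ (Finset.sum_nonneg fun k _ => abs_nonneg _)
        calc (∑ k, |u k|) ≤ ∑ _k : Fin d, ‖u‖ := Finset.sum_le_sum fun k _ => euclid_abs_coord_le d u k
        _ = d * ‖u‖ := by simp [Finset.sum_const, nsmul_eq_mul]
    _ = L * (d * ‖u‖) ^ n := mul_comm _ _

lemma iteratedDeriv_comp_line {E : Type*} [NormedAddCommGroup E] [NormedSpace ℝ E]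
    {N : WithTop ℕ∞} {I : E → ℝ} (hI : ContDiff ℝ N I) (x u : E) :
    ∀ n : ℕ, (n : WithTop ℕ∞) ≤ N → ∀ τ : ℝ,
      iteratedDeriv n (fun s => I (x + s • u)) τ
        = iteratedFDeriv ℝ n I (x + τ • u) (fun _ => u) := by
  intro n
  induction n with
  | zero => intro _ τ; simp [iteratedDeriv_zero]
  | succ n ih =>
    intro hn τ
    have hn' : (n : WithTop ℕ∞) ≤ N := le_trans (by exact_mod_cast Nat.cast_le.mpr n.le_succ) hn
    have hIH : iteratedDeriv n (fun s => I (x + s • u))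
        = fun s => iteratedFDeriv ℝ n I (x + s • u) (fun _ => u) := funext (ih hn')
    rw [iteratedDeriv_succ, hIH]
    have hγ : HasDerivAt (fun s : ℝ => x + s • u) u τ := by
      simpa using ((hasDerivAt_id τ).smul_const u).const_add x
    have hcast : (n:WithTop ℕ∞) < (((n+1:ℕ)):WithTop ℕ∞) := by exact_mod_cast Nat.lt_succ_self n
    have hlt : (n : WithTop ℕ∞) < N := lt_of_lt_of_le hcast hn
    have hdF : HasFDerivAt (iteratedFDeriv ℝ n I)
        (fderiv ℝ (iteratedFDeriv ℝ n I) (x + τ • u)) (x + τ • u) :=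
      ((hI.differentiable_iteratedFDeriv hlt)
        (x + τ • u)).hasFDerivAt
    have hcomp : HasDerivAt (fun s : ℝ => iteratedFDeriv ℝ n I (x + s • u))
        (fderiv ℝ (iteratedFDeriv ℝ n I) (x + τ • u) u) τ :=
      hdF.comp_hasDerivAt τ hγ
    have happ : HasDerivAt (fun s : ℝ => iteratedFDeriv ℝ n I (x + s • u) (fun _ => u))
        ((fderiv ℝ (iteratedFDeriv ℝ n I) (x + τ • u) u) (fun _ => u)) τ :=
      (ContinuousMultilinearMap.apply ℝ (fun _ : Fin n => E) ℝ
        (fun _ => u)).hasFDerivAt.comp_hasDerivAt τ hcomp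
    rw [happ.deriv, iteratedFDeriv_succ_apply_left]
    rfl

lemma iteratedDerivWithin_eq_iteratedDeriv_of_contDiff {g : ℝ → ℝ} {n : ℕ}
    (hg : ContDiff ℝ (n:ℕ∞) g) {s : Set ℝ} (hs : UniqueDiffOn ℝ s) {x : ℝ} (hx : x ∈ s) :
    iteratedDerivWithin n g s x = iteratedDeriv n g x := by
  rw [iteratedDerivWithin_eq_iteratedFDerivWithin, iteratedDeriv_eq_iteratedFDeriv]
  congr 1
  have h1 : HasFTaylorSeriesUpToOn (n:ℕ∞) g (ftaylorSeries ℝ g) s :=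
    (contDiff_iff_ftaylorSeries.mp hg).hasFTaylorSeriesUpToOn s
  exact (h1.eq_iteratedFDerivWithin_of_uniqueDiffOn le_rfl hs hx).symm

lemma quadrature_defect {D n : ℕ} (b c : Fin D → ℝ)
    (hc : ∀ i, c i ∈ Set.Icc (0:ℝ) 1)
    (horder : ∀ p : Polynomial ℝ, p.degree < ((n+1 : ℕ) : WithBot ℕ) →
      ∑ i, b i * p.eval (c i) = ∫ τ in (0:ℝ)..1, p.eval τ)
    {g : ℝ → ℝ} (hg : ContDiff ℝ ((n+1 : ℕ):ℕ∞) g) {Mg : ℝ}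
    (hMg : ∀ τ ∈ Set.Icc (0:ℝ) 1, |iteratedDeriv (n+1) g τ| ≤ Mg) :
    |∑ i, b i * g (c i) - ∫ τ in (0:ℝ)..1, g τ|
      ≤ ((∑ i, |b i|) + 1) * (Mg / n.factorial) := by
  have hMg0 : 0 ≤ Mg := le_trans (abs_nonneg _) (hMg 0 (by norm_num))
  -- Taylor remainder bound
  have hrem : ∀ x ∈ Set.Icc (0:ℝ) 1,
      |g x - taylorWithinEval g n (Set.Icc 0 1) 0 x| ≤ Mg / n.factorial := by
    intro x hx
    have hb : ∀ y ∈ Set.Icc (0:ℝ) 1,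
        ‖iteratedDerivWithin (n+1) g (Set.Icc (0:ℝ) 1) y‖ ≤ Mg := by
      intro y hy
      rw [iteratedDerivWithin_eq_iteratedDeriv_of_contDiff hg (uniqueDiffOn_Icc one_pos) hy]
      exact hMg y hy
    have := taylor_mean_remainder_bound (f := g) (a := 0) (b := 1) (n := n)
      zero_le_one (hg.contDiffOn) hx hb
    rw [Real.norm_eq_abs] at this
    refine this.trans ?_
    rw [div_le_div_iff_of_pos_right (by positivity)]
    calc Mg * (x - 0)^(n+1) ≤ Mg * 1 := by
          apply mul_le_mul_of_nonneg_left _ hMg0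
          rw [sub_zero]
          exact pow_le_one₀ hx.1 hx.2
    _ = Mg := mul_one _
  -- the Taylor polynomial as a Polynomial
  set p : Polynomial ℝ := ∑ k ∈ Finset.range (n+1),
    Polynomial.C (iteratedDerivWithin k g (Set.Icc (0:ℝ) 1) 0 / k.factorial) * Polynomial.X ^ k
    with hp
  have hpe : ∀ x : ℝ, p.eval x = taylorWithinEval g n (Set.Icc (0:ℝ) 1) 0 x := by
    intro x
    rw [taylor_within_apply, hp]
    rw [Polynomial.eval_finset_sum]
    apply Finset.sum_congr rfl
    intro k _
    simp [smul_eq_mul]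
    ring
  have hpdeg : p.degree < ((n+1:ℕ) : WithBot ℕ) := by
    apply lt_of_le_of_lt (Polynomial.degree_sum_le _ _)
    rw [Finset.sup_lt_iff (by exact_mod_cast WithBot.bot_lt_coe (n+1))]
    intro k hk
    apply lt_of_le_of_lt (Polynomial.degree_C_mul_X_pow_le _ _)
    exact_mod_cast Finset.mem_range.mp hk
  have hpint := horder p hpdeg
  -- continuity and integrability
  have hgc : Continuous g := hg.continuous
  have hint_g : IntervalIntegrable g MeasureTheory.volume 0 1 := hgc.intervalIntegrable 0 1
  have hint_p : IntervalIntegrable (fun τ => p.eval τ) MeasureTheory.volume 0 1 :=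
    (p.continuous_aeval).intervalIntegrable 0 1
  -- rewrite the defect
  have key : ∑ i, b i * g (c i) - ∫ τ in (0:ℝ)..1, g τ
      = (∑ i, b i * (g (c i) - p.eval (c i))) - ∫ τ in (0:ℝ)..1, (g τ - p.eval τ) := by
    rw [intervalIntegral.integral_sub hint_g hint_p]
    have : ∑ i, b i * (g (c i) - p.eval (c i))
        = ∑ i, b i * g (c i) - ∑ i, b i * p.eval (c i) := by
      rw [← Finset.sum_sub_distrib]
      apply Finset.sum_congr rfl
      intros; ring
    rw [this, hpint]
    ring
  rw [key]
  have habs : ∀ i, |g (c i) - p.eval (c i)| ≤ Mg / n.factorial := by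
    intro i
    rw [hpe]
    exact hrem _ (hc i)
  have hintb : |∫ τ in (0:ℝ)..1, (g τ - p.eval τ)| ≤ Mg / n.factorial := by
    have := intervalIntegral.norm_integral_le_of_norm_le_const
      (C := Mg / n.factorial) (f := fun τ => g τ - p.eval τ) (a := (0:ℝ)) (b := 1) ?_
    · simpa using this
    · intro x hx
      rw [Set.uIoc_of_le zero_le_one] at hx
      show |g x - p.eval x| ≤ Mg / n.factorial
      rw [hpe x]
      exact hrem x ⟨le_of_lt hx.1, hx.2⟩
  calc |(∑ i, b i * (g (c i) - p.eval (c i))) - ∫ τ in (0:ℝ)..1, (g τ - p.eval τ)|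
      ≤ |∑ i, b i * (g (c i) - p.eval (c i))| + |∫ τ in (0:ℝ)..1, (g τ - p.eval τ)| :=
        abs_sub _ _
    _ ≤ (∑ i, |b i|) * (Mg / n.factorial) + Mg / n.factorial := by
        gcongr
        calc |∑ i, b i * (g (c i) - p.eval (c i))| ≤ ∑ i, |b i * (g (c i) - p.eval (c i))| :=
              Finset.abs_sum_le_sum_abs _ _
        _ ≤ ∑ i, |b i| * (Mg / n.factorial) := by
            apply Finset.sum_le_sum
            intro i _
            rw [abs_mul]
            exact mul_le_mul_of_nonneg_left (habs i) (abs_nonneg _)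
        _ = (∑ i, |b i|) * (Mg / n.factorial) := by rw [Finset.sum_mul]
    _ = ((∑ i, |b i|) + 1) * (Mg / n.factorial) := by ring

set_option maxHeartbeats 1000000 in
set_option synthInstance.maxHeartbeats 500000 in
/-- Pathwise drift of the invariant for the scheme with quadrature. Given a
quadrature formula of order `q ≥ 1`, an invariant `I` with `|∇I| ≤ B` and partial
derivatives of order `q+1` bounded by `L`, and skew-symmetric matrices `S(z)`, `T_r(z)`
with operator norms at most `c₀`, there is a constant `K` such that whenever
`y = x + (h S((x+y)/2) + Σ_r w_r T_r((x+y)/2)) Σ_i b_i ∇I(x + c_i(y − x))`, one has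
`|I(y) − I(x)| ≤ K (|h| + Σ_r |w_r|) |y − x|^q`. -/
theorem invariant_drift_bound_quadrature_scheme
    (d m D q : ℕ) (hq : 1 ≤ q) (b c : Fin D → ℝ)
    (hc : ∀ i, c i ∈ Set.Icc (0:ℝ) 1)
    (horder : ∀ p : Polynomial ℝ, p.degree < (q : WithBot ℕ) →
      ∑ i, b i * p.eval (c i) = ∫ τ in (0:ℝ)..1, p.eval τ)
    (I : EuclideanSpace ℝ (Fin d) → ℝ) (B L c₀ : ℝ)
    (hI : ContDiff ℝ (q + 1) I)
    (hB : ∀ z, ‖gradient I z‖ ≤ B)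
    (hL : ∀ (z : EuclideanSpace ℝ (Fin d)) (v : Fin (q + 1) → Fin d),
      |iteratedFDeriv ℝ (q + 1) I z (fun j => EuclideanSpace.single (v j) (1:ℝ))| ≤ L)
    (S : EuclideanSpace ℝ (Fin d) → Matrix (Fin d) (Fin d) ℝ)
    (T : Fin m → EuclideanSpace ℝ (Fin d) → Matrix (Fin d) (Fin d) ℝ)
    (hS : ∀ z, (S z)ᵀ = -(S z)) (hT : ∀ r z, (T r z)ᵀ = -(T r z))
    (hSnorm : ∀ z, ‖Matrix.toEuclideanCLM (𝕜 := ℝ) (S z)‖ ≤ c₀)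
    (hTnorm : ∀ r z, ‖Matrix.toEuclideanCLM (𝕜 := ℝ) (T r z)‖ ≤ c₀) :
    ∃ K : ℝ, ∀ (h : ℝ) (w : Fin m → ℝ) (x y : EuclideanSpace ℝ (Fin d)),
      y = x + Matrix.toEuclideanCLM (𝕜 := ℝ)
          (h • S ((2:ℝ)⁻¹ • (x + y)) + ∑ r, w r • T r ((2:ℝ)⁻¹ • (x + y)))
          (∑ i, b i • gradient I (x + c i • (y - x))) →
      |I y - I x| ≤ K * (|h| + ∑ r, |w r|) * ‖y - x‖ ^ q := by
  rcases Nat.eq_zero_or_pos d with hd | hd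
  · subst hd
    refine ⟨0, fun h w x y hy => ?_⟩
    have hxy : x = y := Subsingleton.elim x y
    obtain ⟨n, hn⟩ : ∃ n, q = n + 1 := ⟨q - 1, (Nat.succ_pred_eq_of_pos hq).symm⟩
    have : ‖y - x‖ = 0 := by rw [hxy]; simp
    simp [hxy, this, hn]
  obtain ⟨n, hn⟩ : ∃ n, q = n + 1 := ⟨q - 1, (Nat.succ_pred_eq_of_pos hq).symm⟩
  subst hn
  have hB0 : 0 ≤ B := le_trans (norm_nonneg _) (hB 0)
  have hc00 : 0 ≤ c₀ := le_trans (norm_nonneg _) (hSnorm 0)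
  have i0 : Fin d := ⟨0, hd⟩
  have hL0 : 0 ≤ L := le_trans (abs_nonneg _) (hL 0 (fun _ => i0))
  set Sb := ∑ i, |b i| with hSbdef
  have hSb0 : 0 ≤ Sb := Finset.sum_nonneg fun i _ => abs_nonneg _
  refine ⟨((Sb + 1) * (L * (d:ℝ)^(n+2) / n.factorial)) * (c₀ * (Sb * B)), ?_⟩
  intro h w x y hy
  set u : EuclideanSpace ℝ (Fin d) := y - x with hu
  set W := |h| + ∑ r, |w r| with hW
  have hW0 : 0 ≤ W := add_nonneg (abs_nonneg _) (Finset.sum_nonneg fun r _ => abs_nonneg _)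
  set γ : ℝ → EuclideanSpace ℝ (Fin d) := fun τ => x + τ • u with hγ
  set f : ℝ → ℝ := fun τ => I (γ τ) with hf
  set g : ℝ → ℝ := fun τ => fderiv ℝ I (γ τ) u with hgdef
  have hI1 : Differentiable ℝ I := hI.differentiable (by simp)
  have hγd : ∀ τ, HasDerivAt γ u τ := fun τ => by
    simpa [hγ] using ((hasDerivAt_id τ).smul_const u).const_add x
  have hγc : Continuous γ := continuous_const.add (continuous_id.smul continuous_const)
  have hfd : ∀ τ, HasDerivAt f (g τ) τ := fun τ =>
    (hI1 (γ τ)).hasFDerivAt.comp_hasDerivAt τ (hγd τ)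
  have hgc : Continuous g :=
    ((hI.continuous_fderiv (by simp)).comp hγc).clm_apply continuous_const
  -- FTC
  have hFTC : I y - I x = ∫ τ in (0:ℝ)..1, g τ := by
    rw [intervalIntegral.integral_eq_sub_of_hasDerivAt (fun τ _ => hfd τ)
      (hgc.intervalIntegrable 0 1)]
    have h1 : f 1 = I y := by simp [hf, hγ, hu]
    have h0 : f 0 = I x := by simp [hf, hγ]
    rw [h1, h0]
  -- quadrature sum vanishes
  set z' : EuclideanSpace ℝ (Fin d) := (2:ℝ)⁻¹ • (x + y) with hz'
  set A : Matrix (Fin d) (Fin d) ℝ := h • S z' + ∑ r, w r • T r z' with hA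
  set v : EuclideanSpace ℝ (Fin d) := ∑ i, b i • gradient I (x + c i • (y - x)) with hv
  set M : EuclideanSpace ℝ (Fin d) →L[ℝ] EuclideanSpace ℝ (Fin d) :=
    Matrix.toEuclideanCLM (𝕜 := ℝ) A with hM
  have huMv : u = M v := by rw [hu, hy]; simp
  have hAT : Aᵀ = -A := by
    rw [hA, Matrix.transpose_add, Matrix.transpose_smul, Matrix.transpose_sum]
    simp only [Matrix.transpose_smul, hS, hT]
    rw [neg_add]
    simp [smul_neg]
  have hstarA : star A = -A := by
    rw [Matrix.star_eq_conjTranspose]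
    rw [show Aᴴ = Aᵀ from by ext i j; simp [Matrix.conjTranspose_apply, Matrix.transpose_apply]]
    exact hAT
  have hMstar : star M = -M := by
    rw [hM, ← map_star (Matrix.toEuclideanCLM (𝕜 := ℝ)) A, hstarA, map_neg]
  have hinner0 : inner (𝕜 := ℝ) v (M v) = (0:ℝ) := by
    have h1 : inner (𝕜 := ℝ) v (M v) = inner (𝕜 := ℝ) ((ContinuousLinearMap.adjoint M) v) v :=
      (ContinuousLinearMap.adjoint_inner_left M v v).symm
    rw [← ContinuousLinearMap.star_eq_adjoint, hMstar] at h1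
    have h2 : inner (𝕜 := ℝ) ((-M) v) v = - inner (𝕜 := ℝ) v (M v) := by
      rw [ContinuousLinearMap.neg_apply, inner_neg_left, real_inner_comm]
    rw [h2] at h1
    linarith
  have hsum0 : ∑ i, b i * g (c i) = 0 := by
    have hge : ∀ i, g (c i) = inner (𝕜 := ℝ) (gradient I (x + c i • (y - x))) u := by
      intro i
      rw [hgdef]
      simp only [hγ]
      rw [gradient, InnerProductSpace.toDual_symm_apply]
    calc ∑ i, b i * g (c i)
        = ∑ i, inner (𝕜 := ℝ) (b i • gradient I (x + c i • (y - x))) u := by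
          apply Finset.sum_congr rfl
          intro i _
          rw [hge i, real_inner_smul_left]
      _ = inner (𝕜 := ℝ) v u := by rw [hv, sum_inner]
      _ = 0 := by rw [huMv]; exact hinner0
  -- smoothness of f and g
  have hγC : ContDiff ℝ (↑(n+1) + 1 : WithTop ℕ∞) γ := by
    rw [hγ]; exact contDiff_const.add (contDiff_id.smul contDiff_const)
  have hfC : ContDiff ℝ (↑(n+1) + 1 : WithTop ℕ∞) f := by
    rw [hf]; exact hI.comp hγC
  have hderivf : deriv f = g := funext fun τ => (hfd τ).deriv
  have hgC : ContDiff ℝ (((n+1:ℕ)):ℕ∞) g := by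
    have h1 := (contDiff_succ_iff_deriv.mp hfC).2.2
    rw [hderivf] at h1
    exact_mod_cast h1
  -- pointwise bound on the (n+1)-st derivative of g
  have hfeq : f = fun s : ℝ => I (x + s • u) := by funext s; rw [hf, hγ]
  have hiter : ∀ τ ∈ Set.Icc (0:ℝ) 1,
      |iteratedDeriv (n+1) g τ| ≤ L * ((d:ℝ) * ‖u‖) ^ (n+2) := by
    intro τ _
    have h1 : iteratedDeriv (n+1) g τ = iteratedDeriv (n+2) f τ := by
      have : iteratedDeriv ((n+1)+1) f τ = iteratedDeriv (n+1) g τ := by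
        rw [iteratedDeriv_succ', hderivf]
      exact this.symm
    have h2 := iteratedDeriv_comp_line hI x u (n+2)
      (by norm_cast) τ
    rw [h1, hfeq, h2]
    exact multilinear_entry_bound _ (hL (x + τ • u)) hL0 u
  -- quadrature defect bound
  have hdef := quadrature_defect b c hc horder (by exact_mod_cast hgC) hiter
  rw [hsum0, ← hFTC] at hdef
  rw [zero_sub, abs_neg] at hdef
  -- operator norm bounds
  have hMnorm : ‖M‖ ≤ c₀ * W := by
    have hMsplit : M = h • Matrix.toEuclideanCLM (𝕜 := ℝ) (S z')
        + ∑ r, w r • Matrix.toEuclideanCLM (𝕜 := ℝ) (T r z') := by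
      rw [hM, hA, map_add, _root_.map_smul, map_sum]
      congr 1
      exact Finset.sum_congr rfl fun r _ => _root_.map_smul _ _ _
    rw [hMsplit]
    calc ‖h • Matrix.toEuclideanCLM (𝕜 := ℝ) (S z')
          + ∑ r, w r • Matrix.toEuclideanCLM (𝕜 := ℝ) (T r z')‖
        ≤ ‖h • Matrix.toEuclideanCLM (𝕜 := ℝ) (S z')‖
          + ‖∑ r, w r • Matrix.toEuclideanCLM (𝕜 := ℝ) (T r z')‖ := norm_add_le _ _
      _ ≤ |h| * c₀ + ∑ r, |w r| * c₀ := by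
          gcongr
          · have hns := norm_smul h (Matrix.toEuclideanCLM (𝕜 := ℝ) (S z'))
            rw [hns, Real.norm_eq_abs]
            exact mul_le_mul_of_nonneg_left (hSnorm z') (abs_nonneg _)
          · refine le_trans (norm_sum_le _ _) ?_
            apply Finset.sum_le_sum
            intro r _
            have hns := norm_smul (w r) (Matrix.toEuclideanCLM (𝕜 := ℝ) (T r z'))
            rw [hns, Real.norm_eq_abs]
            exact mul_le_mul_of_nonneg_left (hTnorm r z') (abs_nonneg _)
      _ = c₀ * W := by rw [hW, ← Finset.sum_mul]; ring
  have hvnorm : ‖v‖ ≤ Sb * B := by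
    rw [hv]
    refine le_trans (norm_sum_le _ _) ?_
    rw [hSbdef, Finset.sum_mul]
    apply Finset.sum_le_sum
    intro i _
    rw [norm_smul, Real.norm_eq_abs]
    exact mul_le_mul_of_nonneg_left (hB _) (abs_nonneg _)
  have hunorm : ‖u‖ ≤ (c₀ * W) * (Sb * B) := by
    rw [huMv]
    exact le_trans (M.le_opNorm v)
      (mul_le_mul hMnorm hvnorm (norm_nonneg v) (by positivity))
  -- final chain
  have hα : (0:ℝ) ≤ (Sb + 1) * (L * (d:ℝ)^(n+2) / n.factorial) := by positivity
  calc |I y - I x| ≤ (Sb + 1) * (L * ((d:ℝ) * ‖u‖) ^ (n+2) / n.factorial) := hdef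
    _ = ((Sb + 1) * (L * (d:ℝ)^(n+2) / n.factorial)) * (‖u‖ * ‖u‖^(n+1)) := by
        rw [mul_pow]
        ring
    _ ≤ ((Sb + 1) * (L * (d:ℝ)^(n+2) / n.factorial)) * (((c₀ * W) * (Sb * B)) * ‖u‖^(n+1)) := by
        apply mul_le_mul_of_nonneg_left _ hα
        exact mul_le_mul_of_nonneg_right hunorm (by positivity)
    _ = ((Sb + 1) * (L * (d:ℝ)^(n+2) / n.factorial)) * (c₀ * (Sb * B)) * W * ‖u‖^(n+1) := by
        ring
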